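/- Let d ≥ 1, let k ≥ 1, and let λ be any ℤ₂-cochain on the d-dimensional hypercube. Then (δλ) ∪_k (δλ) = δ( λ ∪_k (δλ) + λ ∪_{k−1} λ ), as an equality of ℤ₂-cochains. In particular, the ∪_k-square of a coboundary is itself a coboundary. -/

import Mathlib

/-- The three possible entries of a cell label of the hypercube:
`dot` = `•` (a spanned direction), `pls` = `+`, `mns` = `−`. -/
inductive Sgn : Type
  | dot : Sgn
  | pls : Sgn
  | mns : Sgn
  deriving DecidableEq

instance instFintypeSgn : Fintype Sgn :=
  ⟨{Sgn.dot, Sgn.pls, Sgn.mns}, fun x => by cases x <;> simp⟩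

/-- A cell of the `d`-dimensional hypercube, labeled by a tuple in `{•,+,−}^d`. -/
abbrev Cell (d : ℕ) := Fin d → Sgn

/-- A `ℤ₂`-cochain on the `d`-dimensional hypercube. -/
abbrev Cochain (d : ℕ) := Cell d → ZMod 2

/-- The top cell `(•,…,•)`. -/
def topCell (d : ℕ) : Cell d := fun _ => Sgn.dot

/-- The set of coordinates of a cell labeled `•`. -/
def dots {d : ℕ} (w : Cell d) : Finset (Fin d) :=
  Finset.univ.filter (fun j => w j = Sgn.dot)

/-- The coboundary of a `ℤ₂`-cochain: `(δα)(w)` is the sum of `α` over all cells obtained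
from `w` by replacing exactly one entry equal to `•` by `+` or by `−`. -/
def delta {d : ℕ} (α : Cochain d) : Cochain d := fun w =>
  ∑ j ∈ dots w, (α (Function.update w j Sgn.pls) + α (Function.update w j Sgn.mns))

/-- The set of coordinates where both `z` and `z'` are `•`. -/
def bothDot {d : ℕ} (z z' : Cell d) : Finset (Fin d) :=
  Finset.univ.filter (fun j => z j = Sgn.dot ∧ z' j = Sgn.dot)

/-- The allowed values of `(z_j, z'_j)` at a coordinate `j` not in the common-`•` set `I`:
`(+,•)` or `(•,−)` when `ℓ(j) = #{i ∈ I : i < j}` is even, and `(−,•)` or `(•,+)` when it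
is odd. -/
def pairCond {d : ℕ} (I : Finset (Fin d)) (j : Fin d) (a b : Sgn) : Prop :=
  if (I.filter (fun i => i < j)).card % 2 = 0 then
    (a = Sgn.pls ∧ b = Sgn.dot) ∨ (a = Sgn.dot ∧ b = Sgn.mns)
  else
    (a = Sgn.mns ∧ b = Sgn.dot) ∨ (a = Sgn.dot ∧ b = Sgn.pls)

/-- The pairs `(z,z')` appearing in the `m`-th higher cup product evaluated on the cell `w`:
the entries of `w` equal to `+` or `−` are fixed in both arguments, there are exactly `m`
coordinates where both `z` and `z'` are `•`, and at the remaining `•`-coordinates of `w`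
the parity condition `pairCond` holds. -/
def IntPair {d : ℕ} (m : ℕ) (w z z' : Cell d) : Prop :=
  (∀ j, w j ≠ Sgn.dot → z j = w j ∧ z' j = w j) ∧
    (bothDot z z').card = m ∧
    ∀ j, w j = Sgn.dot → j ∉ bothDot z z' → pairCond (bothDot z z') j (z j) (z' j)

open Classical in
/-- The finite set of pairs in `Int_m` relative to the cell `w`. -/
noncomputable def intPairs {d : ℕ} (m : ℕ) (w : Cell d) : Finset (Cell d × Cell d) :=
  Finset.univ.filter (fun p => IntPair m w p.1 p.2)

/-- The higher cup product `α ∪_m β` of `ℤ₂`-cochains: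
`(α ∪_m β)(w) = Σ_{(z,z') ∈ Int_m(w)} α(z)·β(z')`. -/
noncomputable def cup {d : ℕ} (m : ℕ) (α β : Cochain d) : Cochain d := fun w =>
  ∑ p ∈ intPairs m w, α p.1 * β p.2

----------------------------------------------------------------------
-- auxiliary development
----------------------------------------------------------------------
namespace CupAux

open Finset Function

variable {d : ℕ}

/-- restriction of a cochain along fixing coordinate `j0` to value `s`. -/
def res (j0 : Fin d) (s : Sgn) (α : Cochain d) : Cochain d :=
  fun x => α (Function.update x j0 s)

lemma res_apply (j0 : Fin d) (s : Sgn) (α : Cochain d) (x : Cell d) :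
    res j0 s α x = α (Function.update x j0 s) := rfl

lemma res_add (j0 : Fin d) (s : Sgn) (α β : Cochain d) :
    res j0 s (α + β) = res j0 s α + res j0 s β := rfl

lemma mem_dots {w : Cell d} {j : Fin d} : j ∈ dots w ↔ w j = Sgn.dot := by
  simp [dots]

lemma mem_bothDot {z z' : Cell d} {j : Fin d} :
    j ∈ bothDot z z' ↔ z j = Sgn.dot ∧ z' j = Sgn.dot := by
  simp [bothDot]

lemma mem_intPairs {m : ℕ} {w : Cell d} {p : Cell d × Cell d} :
    p ∈ intPairs m w ↔ IntPair m w p.1 p.2 := by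
  simp [intPairs]

lemma bothDot_comm (z z' : Cell d) : bothDot z z' = bothDot z' z := by
  ext j; simp [mem_bothDot, and_comm]

lemma bothDot_subset_dots {m : ℕ} {w z z' : Cell d} (h : IntPair m w z z') :
    bothDot z z' ⊆ dots w := by
  intro j hj
  rw [mem_bothDot] at hj
  rw [mem_dots]
  by_contra hw
  exact hw (((h.1 j hw).1).symm.trans hj.1)

lemma upd_self {x : Cell d} {j : Fin d} {s : Sgn} (h : x j = s) :
    Function.update x j s = x := by rw [← h]; exact Function.update_eq_self j x

lemma dots_update_ne {w : Cell d} {j : Fin d} {s : Sgn} (hs : s ≠ Sgn.dot) :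
    dots (Function.update w j s) = (dots w).erase j := by
  ext i
  rcases eq_or_ne i j with rfl | hij
  · simp [mem_dots, hs]
  · simp [mem_dots, Finset.mem_erase, hij, Function.update_of_ne hij]

lemma char2 (x : ZMod 2) : x + x = 0 := by
  have : (2 : ZMod 2) = 0 := rfl
  calc x + x = 2 * x := by ring
  _ = 0 := by rw [this, zero_mul]


----------------------------------------------------------------------
-- additivity
----------------------------------------------------------------------

lemma delta_add (α β : Cochain d) : delta (α + β) = delta α + delta β := by
  funext w
  simp only [delta, Pi.add_apply]
  rw [← Finset.sum_add_distrib]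
  exact Finset.sum_congr rfl (by intros; ring)

lemma cup_add_left (m : ℕ) (α α' β : Cochain d) :
    cup m (α + α') β = cup m α β + cup m α' β := by
  funext w
  simp only [cup, Pi.add_apply]
  rw [← Finset.sum_add_distrib]
  exact Finset.sum_congr rfl (by intros; ring)

lemma cup_add_right (m : ℕ) (α β β' : Cochain d) :
    cup m α (β + β') = cup m α β + cup m α β' := by
  funext w
  simp only [cup, Pi.add_apply]
  rw [← Finset.sum_add_distrib]
  exact Finset.sum_congr rfl (by intros; ring)

lemma cup_zero_right (m : ℕ) (α : Cochain d) : cup m α (0 : Cochain d) = 0 := by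
  funext w; simp [cup]

----------------------------------------------------------------------
-- delta lemmas
----------------------------------------------------------------------

lemma delta_congr {α β : Cochain d} {u : Cell d}
    (h : ∀ j ∈ dots u, ∀ s : Sgn, s ≠ Sgn.dot →
      α (Function.update u j s) = β (Function.update u j s)) :
    delta α u = delta β u := by
  unfold delta
  refine Finset.sum_congr rfl fun j hj => ?_
  rw [h j hj _ (by simp), h j hj _ (by simp)]

lemma delta_split (j0 : Fin d) {w : Cell d} (h : w j0 = Sgn.dot) (α : Cochain d) :
    delta α w = α (Function.update w j0 Sgn.pls) + α (Function.update w j0 Sgn.mns)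
      + delta (res j0 Sgn.dot α) (Function.update w j0 Sgn.pls) := by
  have hj0 : j0 ∈ dots w := mem_dots.2 h
  simp only [delta]
  rw [← Finset.add_sum_erase _ _ hj0]
  congr 1
  rw [dots_update_ne (by simp)]
  refine Finset.sum_congr rfl fun j hj => ?_
  have hjne : j ≠ j0 := (Finset.mem_erase.1 hj).1
  have key : ∀ s : Sgn,
      res j0 Sgn.dot α (Function.update (Function.update w j0 Sgn.pls) j s)
        = α (Function.update w j s) := by
    intro s
    rw [res_apply, Function.update_comm hjne.symm, Function.update_idem]
    congr 1
    have : (Function.update w j s) j0 = Sgn.dot := by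
      rw [Function.update_of_ne hjne.symm, h]
    exact upd_self this
  rw [key, key]

lemma delta_res_pls {α : Cochain d} {x : Cell d} {j0 : Fin d} (hx : x j0 = Sgn.pls) :
    delta α x = delta (res j0 Sgn.pls α) x := by
  refine delta_congr fun j hj s hs => ?_
  have hjne : j ≠ j0 := fun e => by
    have h2 := mem_dots.1 hj
    rw [e, hx] at h2
    exact Sgn.noConfusion h2
  rw [res_apply]
  congr 1
  have : (Function.update x j s) j0 = Sgn.pls := by
    rw [Function.update_of_ne hjne.symm, hx]
  exact (upd_self this).symm

lemma delta_at_mns {α : Cochain d} {x : Cell d} {j0 : Fin d} (hx : x j0 = Sgn.pls) :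
    delta α (Function.update x j0 Sgn.mns) = delta (res j0 Sgn.mns α) x := by
  have hnd : j0 ∉ dots x := by
    rw [mem_dots, hx]; simp
  unfold delta
  rw [dots_update_ne (by simp), Finset.erase_eq_of_notMem hnd]
  refine Finset.sum_congr rfl fun j hj => ?_
  have hjne : j ≠ j0 := fun e => hnd (e ▸ hj)
  have key : ∀ s : Sgn,
      α (Function.update (Function.update x j0 Sgn.mns) j s)
        = res j0 Sgn.mns α (Function.update x j s) := by
    intro s
    rw [res_apply, Function.update_comm hjne]
  rw [key, key]

lemma delta_res_dot {α : Cochain d} {x : Cell d} {j0 : Fin d} (hx : x j0 = Sgn.pls) :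
    delta α (Function.update x j0 Sgn.dot)
      = α x + α (Function.update x j0 Sgn.mns) + delta (res j0 Sgn.dot α) x := by
  have h := delta_split j0 (w := Function.update x j0 Sgn.dot) (by simp) α
  rw [Function.update_idem, Function.update_idem] at h
  rw [h, upd_self hx]

----------------------------------------------------------------------
-- cup congruence
----------------------------------------------------------------------

lemma intPairs_coord {m : ℕ} {u : Cell d} {p : Cell d × Cell d} (hp : p ∈ intPairs m u)
    {j : Fin d} (hj : u j ≠ Sgn.dot) : p.1 j = u j ∧ p.2 j = u j :=
  (mem_intPairs.1 hp).1 j hj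

lemma cup_congr {m : ℕ} {α α' β β' : Cochain d} {u : Cell d} {j0 : Fin d}
    (hu : u j0 ≠ Sgn.dot)
    (hα : ∀ z : Cell d, z j0 = u j0 → α z = α' z)
    (hβ : ∀ z : Cell d, z j0 = u j0 → β z = β' z) :
    cup m α β u = cup m α' β' u := by
  unfold cup
  refine Finset.sum_congr rfl fun p hp => ?_
  obtain ⟨h1, h2⟩ := intPairs_coord hp hu
  rw [hα _ h1, hβ _ h2]

lemma cup_pls {m : ℕ} {α β : Cochain d} {x : Cell d} {j0 : Fin d} (hx : x j0 = Sgn.pls) :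
    cup m α β x = cup m (res j0 Sgn.pls α) (res j0 Sgn.pls β) x := by
  refine cup_congr (j0 := j0) (by rw [hx]; simp) (fun z hz => ?_) (fun z hz => ?_) <;>
    · rw [res_apply, upd_self (hz.trans hx)]

lemma res_delta_pls {α : Cochain d} {z : Cell d} {j0 : Fin d} (hz : z j0 = Sgn.pls) :
    res j0 Sgn.pls (delta α) z = delta (res j0 Sgn.pls α) z := by
  rw [res_apply, upd_self hz]
  exact delta_res_pls hz

lemma res_delta_mns {α : Cochain d} {z : Cell d} {j0 : Fin d} (hz : z j0 = Sgn.pls) :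
    res j0 Sgn.mns (delta α) z = delta (res j0 Sgn.mns α) z := by
  rw [res_apply]
  exact delta_at_mns hz

lemma res_delta_dot {α : Cochain d} {z : Cell d} {j0 : Fin d} (hz : z j0 = Sgn.pls) :
    res j0 Sgn.dot (delta α) z
      = (res j0 Sgn.pls α + res j0 Sgn.mns α + delta (res j0 Sgn.dot α)) z := by
  rw [res_apply, delta_res_dot hz]
  simp only [Pi.add_apply]
  rw [res_apply, res_apply, upd_self hz]


----------------------------------------------------------------------
-- pairCond lemmas
----------------------------------------------------------------------

lemma pairCond_flip {I I' : Finset (Fin d)} {j : Fin d} {a b : Sgn}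
    (h : (I'.filter (fun i => i < j)).card + 1 = (I.filter (fun i => i < j)).card) :
    pairCond I j a b ↔ pairCond I' j b a := by
  unfold pairCond
  rcases Nat.mod_two_eq_zero_or_one ((I'.filter (fun i => i < j)).card) with h0 | h0
  · rw [if_neg (by omega), if_pos h0]
    tauto
  · rw [if_pos (by omega), if_neg (by omega)]
    tauto

lemma pairCond_of_min {I : Finset (Fin d)} {j : Fin d} (h : ∀ i ∈ I, ¬ i < j) {a b : Sgn} :
    pairCond I j a b ↔ ((a = Sgn.pls ∧ b = Sgn.dot) ∨ (a = Sgn.dot ∧ b = Sgn.mns)) := by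
  have he : I.filter (fun i => i < j) = ∅ := Finset.filter_eq_empty_iff.2 h
  unfold pairCond
  rw [he]
  norm_num

----------------------------------------------------------------------
-- bothDot update lemmas
----------------------------------------------------------------------

lemma bothDot_update_left {z z' : Cell d} {j0 : Fin d} {s s' : Sgn} (hs : s ≠ Sgn.dot) :
    bothDot (Function.update z j0 s) (Function.update z' j0 s') = (bothDot z z').erase j0 := by
  ext i
  rcases eq_or_ne i j0 with rfl | hij
  · simp [mem_bothDot, hs]
  · simp [mem_bothDot, Finset.mem_erase, hij, Function.update_of_ne hij]

lemma bothDot_update_right {z z' : Cell d} {j0 : Fin d} {s s' : Sgn} (hs' : s' ≠ Sgn.dot) :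
    bothDot (Function.update z j0 s) (Function.update z' j0 s') = (bothDot z z').erase j0 := by
  ext i
  rcases eq_or_ne i j0 with rfl | hij
  · simp [mem_bothDot, hs']
  · simp [mem_bothDot, Finset.mem_erase, hij, Function.update_of_ne hij]

lemma bothDot_update_dot_dot {z z' : Cell d} {j0 : Fin d} :
    bothDot (Function.update z j0 Sgn.dot) (Function.update z' j0 Sgn.dot)
      = insert j0 (bothDot z z') := by
  ext i
  rcases eq_or_ne i j0 with rfl | hij
  · simp [mem_bothDot]
  · simp [mem_bothDot, Finset.mem_insert, hij, Function.update_of_ne hij]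

lemma bothDot_update_right_of_ne {z z' : Cell d} {j0 : Fin d} {s : Sgn}
    (hz : z j0 ≠ Sgn.dot) :
    bothDot z (Function.update z' j0 s) = bothDot z z' := by
  ext i
  rcases eq_or_ne i j0 with rfl | hij
  · simp [mem_bothDot, hz]
  · simp [mem_bothDot, hij, Function.update_of_ne hij]

----------------------------------------------------------------------
-- change of fixed coordinate, and cup at minus
----------------------------------------------------------------------

lemma IntPair_change {m : ℕ} {x z z' : Cell d} {j0 : Fin d} (hx : x j0 ≠ Sgn.dot)
    (h : IntPair m x z z') {c : Sgn} (hc : c ≠ Sgn.dot) :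
    IntPair m (Function.update x j0 c) (Function.update z j0 c) (Function.update z' j0 c) := by
  obtain ⟨h1, h2, h3⟩ := h
  have hz : z j0 = x j0 := (h1 j0 hx).1
  have hbd : bothDot (Function.update z j0 c) (Function.update z' j0 c) = bothDot z z' := by
    rw [bothDot_update_left hc, Finset.erase_eq_of_notMem]
    rw [mem_bothDot]
    rintro ⟨hd, _⟩
    exact hx (hz ▸ hd)
  refine ⟨?_, by rw [hbd]; exact h2, ?_⟩
  · intro j hj
    rcases eq_or_ne j j0 with rfl | hij
    · simp
    · rw [Function.update_of_ne hij] at hj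
      obtain ⟨d1, d2⟩ := h1 j hj
      rw [Function.update_of_ne hij, Function.update_of_ne hij, Function.update_of_ne hij]
      exact ⟨d1, d2⟩
  · intro j hj hnot
    rcases eq_or_ne j j0 with rfl | hij
    · rw [Function.update_self] at hj
      exact absurd hj hc
    · rw [Function.update_of_ne hij] at hj
      rw [hbd] at hnot
      rw [hbd, Function.update_of_ne hij, Function.update_of_ne hij]
      exact h3 j hj hnot

lemma cup_mns {m : ℕ} {α β : Cochain d} {x : Cell d} {j0 : Fin d} (hx : x j0 = Sgn.pls) :
    cup m α β (Function.update x j0 Sgn.mns)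
      = cup m (res j0 Sgn.mns α) (res j0 Sgn.mns β) x := by
  unfold cup
  refine Finset.sum_nbij'
    (fun p => (Function.update p.1 j0 Sgn.pls, Function.update p.2 j0 Sgn.pls))
    (fun q => (Function.update q.1 j0 Sgn.mns, Function.update q.2 j0 Sgn.mns))
    ?_ ?_ ?_ ?_ ?_
  · intro p hp
    rw [mem_intPairs] at hp ⊢
    have := IntPair_change (x := Function.update x j0 Sgn.mns) (j0 := j0) (by simp) hp
      (c := Sgn.pls) (by simp)
    rwa [Function.update_idem, upd_self hx] at this
  · intro q hq
    rw [mem_intPairs] at hq ⊢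
    exact IntPair_change (j0 := j0) (by rw [hx]; simp) hq (by simp)
  · intro p hp
    rw [mem_intPairs] at hp
    have h1 : p.1 j0 = Sgn.mns := by
      have := (hp.1 j0 (show Function.update x j0 Sgn.mns j0 ≠ Sgn.dot by simp)).1
      rwa [Function.update_self] at this
    have h2 : p.2 j0 = Sgn.mns := by
      have := (hp.1 j0 (show Function.update x j0 Sgn.mns j0 ≠ Sgn.dot by simp)).2
      rwa [Function.update_self] at this
    simp only [Function.update_idem]
    rw [upd_self h1, upd_self h2]
  · intro q hq
    rw [mem_intPairs] at hq
    have h1 : q.1 j0 = Sgn.pls := by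
      have := (hq.1 j0 (show x j0 ≠ Sgn.dot by rw [hx]; simp)).1
      rwa [hx] at this
    have h2 : q.2 j0 = Sgn.pls := by
      have := (hq.1 j0 (show x j0 ≠ Sgn.dot by rw [hx]; simp)).2
      rwa [hx] at this
    simp only [Function.update_idem]
    rw [upd_self h1, upd_self h2]
  · intro p hp
    rw [mem_intPairs] at hp
    have h1 : p.1 j0 = Sgn.mns := by
      have := (hp.1 j0 (show Function.update x j0 Sgn.mns j0 ≠ Sgn.dot by simp)).1
      rwa [Function.update_self] at this
    have h2 : p.2 j0 = Sgn.mns := by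
      have := (hp.1 j0 (show Function.update x j0 Sgn.mns j0 ≠ Sgn.dot by simp)).2
      rwa [Function.update_self] at this
    rw [res_apply, res_apply, Function.update_idem, Function.update_idem,
      upd_self h1, upd_self h2]

----------------------------------------------------------------------
-- trichotomy
----------------------------------------------------------------------

lemma intPair_j0_cases {m : ℕ} {w z z' : Cell d} (h : IntPair m w z z') {j0 : Fin d}
    (hw : w j0 = Sgn.dot) (hmin : ∀ j ∈ dots w, j0 ≤ j) :
    (z j0 = Sgn.dot ∧ z' j0 = Sgn.dot) ∨ (z j0 = Sgn.pls ∧ z' j0 = Sgn.dot)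
      ∨ (z j0 = Sgn.dot ∧ z' j0 = Sgn.mns) := by
  by_cases hb : j0 ∈ bothDot z z'
  · exact Or.inl (mem_bothDot.1 hb)
  · have h3 := h.2.2 j0 hw hb
    have hemp : ∀ i ∈ bothDot z z', ¬ i < j0 := fun i hi =>
      not_lt.2 (hmin i (bothDot_subset_dots h hi))
    rw [pairCond_of_min hemp] at h3
    exact Or.inr h3


----------------------------------------------------------------------
-- the three parts of the splitting of `cup` at the minimal dot
----------------------------------------------------------------------

section Parts

variable {j0 : Fin d} {w : Cell d}

lemma part_ii (hw : w j0 = Sgn.dot) (hmin : ∀ j ∈ dots w, j0 ≤ j) (m : ℕ) (α β : Cochain d) :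
    ∑ p ∈ ((intPairs m w).filter fun p => p.2 j0 = Sgn.dot).filter
        (fun p => ¬ p.1 j0 = Sgn.dot), α p.1 * β p.2
      = ∑ q ∈ intPairs m (Function.update w j0 Sgn.pls),
          res j0 Sgn.pls α q.1 * res j0 Sgn.dot β q.2 := by
  classical
  set u := Function.update w j0 Sgn.pls with hu_def
  have hu0 : u j0 = Sgn.pls := Function.update_self _ _ _
  have huj : ∀ j : Fin d, j ≠ j0 → u j = w j := fun j hj => Function.update_of_ne hj _ _
  have hltw : ∀ j : Fin d, w j = Sgn.dot → j ≠ j0 → j0 < j := fun j hj hne =>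
    lt_of_le_of_ne (hmin j (mem_dots.2 hj)) (Ne.symm hne)
  refine Finset.sum_nbij'
    (fun p => (p.1, Function.update p.2 j0 Sgn.pls))
    (fun q => (q.1, Function.update q.2 j0 Sgn.dot)) ?_ ?_ ?_ ?_ ?_
  · intro p hp
    simp only [Finset.mem_filter] at hp
    obtain ⟨⟨hpX, hp2⟩, hp1⟩ := hp
    rw [mem_intPairs] at hpX
    have htri := intPair_j0_cases hpX hw hmin
    have hcase : p.1 j0 = Sgn.pls ∧ p.2 j0 = Sgn.dot := by tauto
    obtain ⟨e1, e2⟩ := hcase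
    obtain ⟨c1, c2, c3⟩ := hpX
    have hbd : bothDot p.1 (Function.update p.2 j0 Sgn.pls) = bothDot p.1 p.2 :=
      bothDot_update_right_of_ne (by rw [e1]; simp)
    rw [mem_intPairs]
    dsimp only
    refine ⟨?_, by rw [hbd]; exact c2, ?_⟩
    · intro j hj
      rcases eq_or_ne j j0 with rfl | hne
      · rw [hu0, Function.update_self]
        exact ⟨e1, rfl⟩
      · rw [huj j hne] at hj ⊢
        obtain ⟨d1, d2⟩ := c1 j hj
        rw [Function.update_of_ne hne]
        exact ⟨d1, d2⟩
    · intro j hj hnot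
      have hne : j ≠ j0 := by
        intro e; rw [e, hu0] at hj; exact Sgn.noConfusion hj
      rw [huj j hne] at hj
      rw [hbd] at hnot
      rw [hbd, Function.update_of_ne hne]
      exact c3 j hj hnot
  · intro q hq
    have hqX := mem_intPairs.1 hq
    obtain ⟨c1, c2, c3⟩ := hqX
    have e1 : q.1 j0 = Sgn.pls := by
      have := (c1 j0 (show u j0 ≠ Sgn.dot by rw [hu0]; simp)).1
      rwa [hu0] at this
    have e2 : q.2 j0 = Sgn.pls := by
      have := (c1 j0 (show u j0 ≠ Sgn.dot by rw [hu0]; simp)).2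
      rwa [hu0] at this
    have hbd : bothDot q.1 (Function.update q.2 j0 Sgn.dot) = bothDot q.1 q.2 :=
      bothDot_update_right_of_ne (by rw [e1]; simp)
    have hsub : ∀ i ∈ bothDot q.1 q.2, ¬ i < j0 := by
      intro i hi
      have hiu : i ∈ dots u := bothDot_subset_dots ⟨c1, c2, c3⟩ hi
      have hine : i ≠ j0 := by
        intro e
        have := mem_dots.1 hiu
        rw [e, hu0] at this
        exact Sgn.noConfusion this
      exact not_lt.2 (hltw i (by rw [← huj i hine]; exact mem_dots.1 hiu) hine).le
    simp only [Finset.mem_filter]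
    refine ⟨⟨?_, Function.update_self _ _ _⟩, by rw [e1]; simp⟩
    rw [mem_intPairs]
    dsimp only
    refine ⟨?_, by rw [hbd]; exact c2, ?_⟩
    · intro j hj
      have hne : j ≠ j0 := fun e => hj (e ▸ hw)
      have := c1 j (by rw [huj j hne]; exact hj)
      rw [huj j hne] at this
      rw [Function.update_of_ne hne]
      exact this
    · intro j hj hnot
      rw [hbd] at hnot
      rcases eq_or_ne j j0 with rfl | hne
      · rw [pairCond_of_min (by rw [hbd]; exact hsub), Function.update_self]
        exact Or.inl ⟨e1, rfl⟩
      · rw [hbd, Function.update_of_ne hne]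
        exact c3 j (by rw [huj j hne]; exact hj) hnot
  · intro p hp
    simp only [Finset.mem_filter] at hp
    obtain ⟨⟨hpX, hp2⟩, hp1⟩ := hp
    show (p.1, Function.update (Function.update p.2 j0 Sgn.pls) j0 Sgn.dot) = p
    rw [Function.update_idem, upd_self hp2]
  · intro q hq
    have hqX := mem_intPairs.1 hq
    have e2 : q.2 j0 = Sgn.pls := by
      have := (hqX.1 j0 (show u j0 ≠ Sgn.dot by rw [hu0]; simp)).2
      rwa [hu0] at this
    show (q.1, Function.update (Function.update q.2 j0 Sgn.dot) j0 Sgn.pls) = q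
    rw [Function.update_idem, upd_self e2]
  · intro p hp
    simp only [Finset.mem_filter] at hp
    obtain ⟨⟨hpX, hp2⟩, hp1⟩ := hp
    rw [mem_intPairs] at hpX
    have htri := intPair_j0_cases hpX hw hmin
    have hcase : p.1 j0 = Sgn.pls ∧ p.2 j0 = Sgn.dot := by tauto
    obtain ⟨e1, e2⟩ := hcase
    show α p.1 * β p.2
      = res j0 Sgn.pls α p.1 * res j0 Sgn.dot β (Function.update p.2 j0 Sgn.pls)
    rw [res_apply, res_apply, Function.update_idem, upd_self e1, upd_self e2]


lemma part_iii (hw : w j0 = Sgn.dot) (hmin : ∀ j ∈ dots w, j0 ≤ j) (m : ℕ) (α β : Cochain d) :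
    ∑ p ∈ (intPairs m w).filter (fun p => ¬ p.2 j0 = Sgn.dot), α p.1 * β p.2
      = ∑ q ∈ intPairs m (Function.update w j0 Sgn.pls),
          res j0 Sgn.dot α q.1 * res j0 Sgn.mns β q.2 := by
  classical
  set u := Function.update w j0 Sgn.pls with hu_def
  have hu0 : u j0 = Sgn.pls := Function.update_self _ _ _
  have huj : ∀ j : Fin d, j ≠ j0 → u j = w j := fun j hj => Function.update_of_ne hj _ _
  have hltw : ∀ j : Fin d, w j = Sgn.dot → j ≠ j0 → j0 < j := fun j hj hne =>
    lt_of_le_of_ne (hmin j (mem_dots.2 hj)) (Ne.symm hne)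
  refine Finset.sum_nbij'
    (fun p => (Function.update p.1 j0 Sgn.pls, Function.update p.2 j0 Sgn.pls))
    (fun q => (Function.update q.1 j0 Sgn.dot, Function.update q.2 j0 Sgn.mns)) ?_ ?_ ?_ ?_ ?_
  · intro p hp
    simp only [Finset.mem_filter] at hp
    obtain ⟨hpX, hp2⟩ := hp
    rw [mem_intPairs] at hpX
    have htri := intPair_j0_cases hpX hw hmin
    have hcase : p.1 j0 = Sgn.dot ∧ p.2 j0 = Sgn.mns := by tauto
    obtain ⟨e1, e2⟩ := hcase
    obtain ⟨c1, c2, c3⟩ := hpX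
    have hbd : bothDot (Function.update p.1 j0 Sgn.pls) (Function.update p.2 j0 Sgn.pls)
        = bothDot p.1 p.2 := by
      rw [bothDot_update_left (show Sgn.pls ≠ Sgn.dot by simp)]
      refine Finset.erase_eq_of_notMem ?_
      rw [mem_bothDot]
      rintro ⟨-, h2⟩
      rw [e2] at h2
      exact Sgn.noConfusion h2
    rw [mem_intPairs]
    dsimp only
    refine ⟨?_, by rw [hbd]; exact c2, ?_⟩
    · intro j hj
      rcases eq_or_ne j j0 with rfl | hne
      · rw [hu0, Function.update_self, Function.update_self]
        exact ⟨rfl, rfl⟩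
      · rw [huj j hne] at hj ⊢
        obtain ⟨d1, d2⟩ := c1 j hj
        rw [Function.update_of_ne hne, Function.update_of_ne hne]
        exact ⟨d1, d2⟩
    · intro j hj hnot
      have hne : j ≠ j0 := by
        intro e; rw [e, hu0] at hj; exact Sgn.noConfusion hj
      rw [huj j hne] at hj
      rw [hbd] at hnot
      rw [hbd, Function.update_of_ne hne, Function.update_of_ne hne]
      exact c3 j hj hnot
  · intro q hq
    have hqX := mem_intPairs.1 hq
    obtain ⟨c1, c2, c3⟩ := hqX
    have e1 : q.1 j0 = Sgn.pls := by
      have := (c1 j0 (show u j0 ≠ Sgn.dot by rw [hu0]; simp)).1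
      rwa [hu0] at this
    have e2 : q.2 j0 = Sgn.pls := by
      have := (c1 j0 (show u j0 ≠ Sgn.dot by rw [hu0]; simp)).2
      rwa [hu0] at this
    have hbd : bothDot (Function.update q.1 j0 Sgn.dot) (Function.update q.2 j0 Sgn.mns)
        = bothDot q.1 q.2 := by
      rw [bothDot_update_right (show Sgn.mns ≠ Sgn.dot by simp)]
      refine Finset.erase_eq_of_notMem ?_
      rw [mem_bothDot]
      rintro ⟨h1, -⟩
      rw [e1] at h1
      exact Sgn.noConfusion h1
    have hsub : ∀ i ∈ bothDot q.1 q.2, ¬ i < j0 := by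
      intro i hi
      have hiu : i ∈ dots u := bothDot_subset_dots ⟨c1, c2, c3⟩ hi
      have hine : i ≠ j0 := by
        intro e
        have := mem_dots.1 hiu
        rw [e, hu0] at this
        exact Sgn.noConfusion this
      exact not_lt.2 (hltw i (by rw [← huj i hine]; exact mem_dots.1 hiu) hine).le
    simp only [Finset.mem_filter]
    refine ⟨?_, by rw [Function.update_self]; simp⟩
    rw [mem_intPairs]
    dsimp only
    refine ⟨?_, by rw [hbd]; exact c2, ?_⟩
    · intro j hj
      have hne : j ≠ j0 := fun e => hj (e ▸ hw)
      have := c1 j (by rw [huj j hne]; exact hj)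
      rw [huj j hne] at this
      rw [Function.update_of_ne hne, Function.update_of_ne hne]
      exact this
    · intro j hj hnot
      rw [hbd] at hnot
      rcases eq_or_ne j j0 with rfl | hne
      · rw [pairCond_of_min (by rw [hbd]; exact hsub), Function.update_self,
          Function.update_self]
        exact Or.inr ⟨rfl, rfl⟩
      · rw [hbd, Function.update_of_ne hne, Function.update_of_ne hne]
        exact c3 j (by rw [huj j hne]; exact hj) hnot
  · intro p hp
    simp only [Finset.mem_filter] at hp
    obtain ⟨hpX, hp2⟩ := hp
    rw [mem_intPairs] at hpX
    have htri := intPair_j0_cases hpX hw hmin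
    have hcase : p.1 j0 = Sgn.dot ∧ p.2 j0 = Sgn.mns := by tauto
    obtain ⟨e1, e2⟩ := hcase
    show (Function.update (Function.update p.1 j0 Sgn.pls) j0 Sgn.dot,
      Function.update (Function.update p.2 j0 Sgn.pls) j0 Sgn.mns) = p
    rw [Function.update_idem, Function.update_idem, upd_self e1, upd_self e2]
  · intro q hq
    have hqX := mem_intPairs.1 hq
    have e1 : q.1 j0 = Sgn.pls := by
      have := (hqX.1 j0 (show u j0 ≠ Sgn.dot by rw [hu0]; simp)).1
      rwa [hu0] at this
    have e2 : q.2 j0 = Sgn.pls := by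
      have := (hqX.1 j0 (show u j0 ≠ Sgn.dot by rw [hu0]; simp)).2
      rwa [hu0] at this
    show (Function.update (Function.update q.1 j0 Sgn.dot) j0 Sgn.pls,
      Function.update (Function.update q.2 j0 Sgn.mns) j0 Sgn.pls) = q
    rw [Function.update_idem, Function.update_idem, upd_self e1, upd_self e2]
  · intro p hp
    simp only [Finset.mem_filter] at hp
    obtain ⟨hpX, hp2⟩ := hp
    rw [mem_intPairs] at hpX
    have htri := intPair_j0_cases hpX hw hmin
    have hcase : p.1 j0 = Sgn.dot ∧ p.2 j0 = Sgn.mns := by tauto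
    obtain ⟨e1, e2⟩ := hcase
    show α p.1 * β p.2 = res j0 Sgn.dot α (Function.update p.1 j0 Sgn.pls)
      * res j0 Sgn.mns β (Function.update p.2 j0 Sgn.pls)
    rw [res_apply, res_apply, Function.update_idem, Function.update_idem,
      upd_self e1, upd_self e2]

lemma part_i (hw : w j0 = Sgn.dot) (hmin : ∀ j ∈ dots w, j0 ≤ j) (m : ℕ) (α β : Cochain d) :
    ∑ p ∈ ((intPairs (m + 1) w).filter fun p => p.2 j0 = Sgn.dot).filter
        (fun p => p.1 j0 = Sgn.dot), α p.1 * β p.2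
      = ∑ q ∈ intPairs m (Function.update w j0 Sgn.pls),
          res j0 Sgn.dot β q.1 * res j0 Sgn.dot α q.2 := by
  classical
  set u := Function.update w j0 Sgn.pls with hu_def
  have hu0 : u j0 = Sgn.pls := Function.update_self _ _ _
  have huj : ∀ j : Fin d, j ≠ j0 → u j = w j := fun j hj => Function.update_of_ne hj _ _
  have hltw : ∀ j : Fin d, w j = Sgn.dot → j ≠ j0 → j0 < j := fun j hj hne =>
    lt_of_le_of_ne (hmin j (mem_dots.2 hj)) (Ne.symm hne)
  refine Finset.sum_nbij'
    (fun p => (Function.update p.2 j0 Sgn.pls, Function.update p.1 j0 Sgn.pls))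
    (fun q => (Function.update q.2 j0 Sgn.dot, Function.update q.1 j0 Sgn.dot)) ?_ ?_ ?_ ?_ ?_
  · intro p hp
    simp only [Finset.mem_filter] at hp
    obtain ⟨⟨hpX, e2⟩, e1⟩ := hp
    rw [mem_intPairs] at hpX
    obtain ⟨c1, c2, c3⟩ := hpX
    have hj0I : j0 ∈ bothDot p.1 p.2 := mem_bothDot.2 ⟨e1, e2⟩
    have hbd : bothDot (Function.update p.2 j0 Sgn.pls) (Function.update p.1 j0 Sgn.pls)
        = (bothDot p.1 p.2).erase j0 := by
      rw [bothDot_update_left (show Sgn.pls ≠ Sgn.dot by simp), bothDot_comm p.2 p.1]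
    rw [mem_intPairs]
    dsimp only
    refine ⟨?_, ?_, ?_⟩
    · intro j hj
      rcases eq_or_ne j j0 with rfl | hne
      · rw [hu0, Function.update_self, Function.update_self]
        exact ⟨rfl, rfl⟩
      · rw [huj j hne] at hj ⊢
        obtain ⟨d1, d2⟩ := c1 j hj
        rw [Function.update_of_ne hne, Function.update_of_ne hne]
        exact ⟨d2, d1⟩
    · rw [hbd, Finset.card_erase_of_mem hj0I, c2]
      simp
    · intro j hj hnot
      have hne : j ≠ j0 := by
        intro e; rw [e, hu0] at hj; exact Sgn.noConfusion hj
      have hwj : w j = Sgn.dot := by rw [← huj j hne]; exact hj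
      have hltj : j0 < j := hltw j hwj hne
      rw [hbd] at hnot
      have hnI : j ∉ bothDot p.1 p.2 := fun h => hnot (Finset.mem_erase.2 ⟨hne, h⟩)
      have horig := c3 j hwj hnI
      rw [hbd, Function.update_of_ne hne, Function.update_of_ne hne]
      have hcard : (((bothDot p.1 p.2).erase j0).filter (fun i => i < j)).card + 1
          = ((bothDot p.1 p.2).filter (fun i => i < j)).card := by
        rw [Finset.filter_erase]
        exact Finset.card_erase_add_one (Finset.mem_filter.2 ⟨hj0I, hltj⟩)
      exact (pairCond_flip hcard).1 horig
  · intro q hq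
    have hqX := mem_intPairs.1 hq
    obtain ⟨c1, c2, c3⟩ := hqX
    have e1 : q.1 j0 = Sgn.pls := by
      have := (c1 j0 (show u j0 ≠ Sgn.dot by rw [hu0]; simp)).1
      rwa [hu0] at this
    have e2 : q.2 j0 = Sgn.pls := by
      have := (c1 j0 (show u j0 ≠ Sgn.dot by rw [hu0]; simp)).2
      rwa [hu0] at this
    have hj0nI : j0 ∉ bothDot q.1 q.2 := by
      rw [mem_bothDot]
      rintro ⟨h1, -⟩
      rw [e1] at h1
      exact Sgn.noConfusion h1
    have hbd : bothDot (Function.update q.2 j0 Sgn.dot) (Function.update q.1 j0 Sgn.dot)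
        = insert j0 (bothDot q.1 q.2) := by
      rw [bothDot_update_dot_dot, bothDot_comm q.2 q.1]
    simp only [Finset.mem_filter]
    refine ⟨⟨?_, Function.update_self _ _ _⟩, Function.update_self _ _ _⟩
    rw [mem_intPairs]
    dsimp only
    refine ⟨?_, ?_, ?_⟩
    · intro j hj
      have hne : j ≠ j0 := fun e => hj (e ▸ hw)
      have := c1 j (by rw [huj j hne]; exact hj)
      rw [huj j hne] at this
      rw [Function.update_of_ne hne, Function.update_of_ne hne]
      exact ⟨this.2, this.1⟩
    · rw [hbd, Finset.card_insert_of_notMem hj0nI, c2]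
    · intro j hj hnot
      rw [hbd] at hnot
      rcases eq_or_ne j j0 with rfl | hne
      · exact absurd (Finset.mem_insert_self j (bothDot q.1 q.2)) hnot
      · have hltj : j0 < j := hltw j hj hne
        have hnI : j ∉ bothDot q.1 q.2 := fun h => hnot (Finset.mem_insert_of_mem h)
        have horig := c3 j (by rw [huj j hne]; exact hj) hnI
        rw [hbd, Function.update_of_ne hne, Function.update_of_ne hne]
        have hcard : ((bothDot q.1 q.2).filter (fun i => i < j)).card + 1
            = ((insert j0 (bothDot q.1 q.2)).filter (fun i => i < j)).card := by
          rw [Finset.filter_insert, if_pos hltj,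
            Finset.card_insert_of_notMem (fun hmem => hj0nI (Finset.mem_filter.1 hmem).1)]
        exact (pairCond_flip hcard).2 horig
  · intro p hp
    simp only [Finset.mem_filter] at hp
    obtain ⟨⟨hpX, e2⟩, e1⟩ := hp
    show (Function.update (Function.update p.1 j0 Sgn.pls) j0 Sgn.dot,
      Function.update (Function.update p.2 j0 Sgn.pls) j0 Sgn.dot) = p
    rw [Function.update_idem, Function.update_idem, upd_self e1, upd_self e2]
  · intro q hq
    have hqX := mem_intPairs.1 hq
    have e1 : q.1 j0 = Sgn.pls := by
      have := (hqX.1 j0 (show u j0 ≠ Sgn.dot by rw [hu0]; simp)).1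
      rwa [hu0] at this
    have e2 : q.2 j0 = Sgn.pls := by
      have := (hqX.1 j0 (show u j0 ≠ Sgn.dot by rw [hu0]; simp)).2
      rwa [hu0] at this
    show (Function.update (Function.update q.1 j0 Sgn.dot) j0 Sgn.pls,
      Function.update (Function.update q.2 j0 Sgn.dot) j0 Sgn.pls) = q
    rw [Function.update_idem, Function.update_idem, upd_self e1, upd_self e2]
  · intro p hp
    simp only [Finset.mem_filter] at hp
    obtain ⟨⟨hpX, e2⟩, e1⟩ := hp
    show α p.1 * β p.2 = res j0 Sgn.dot β (Function.update p.2 j0 Sgn.pls)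
      * res j0 Sgn.dot α (Function.update p.1 j0 Sgn.pls)
    rw [res_apply, res_apply, Function.update_idem, Function.update_idem,
      upd_self e1, upd_self e2, mul_comm]

end Parts


----------------------------------------------------------------------
-- the splitting of cup at the minimal dot coordinate
----------------------------------------------------------------------

noncomputable def lowCup : ℕ → Cochain d → Cochain d → Cochain d
  | 0, _, _ => 0
  | (m + 1), α, β => cup m α β

lemma lowCup_zero (α β : Cochain d) : lowCup 0 α β = 0 := rfl

lemma lowCup_succ (m : ℕ) (α β : Cochain d) : lowCup (m + 1) α β = cup m α β := rfl

lemma delta_zero : delta (0 : Cochain d) = 0 := by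
  funext w; simp [delta]

section Split

variable {j0 : Fin d} {w : Cell d}

lemma cup_split_zero (hw : w j0 = Sgn.dot) (hmin : ∀ j ∈ dots w, j0 ≤ j) (α β : Cochain d) :
    cup 0 α β w
      = cup 0 (res j0 Sgn.pls α) (res j0 Sgn.dot β) (Function.update w j0 Sgn.pls)
      + cup 0 (res j0 Sgn.dot α) (res j0 Sgn.mns β) (Function.update w j0 Sgn.pls) := by
  classical
  unfold cup
  rw [← Finset.sum_filter_add_sum_filter_not (intPairs 0 w) (fun p => p.2 j0 = Sgn.dot)
    (fun p => α p.1 * β p.2)]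
  rw [← Finset.sum_filter_add_sum_filter_not
    ((intPairs 0 w).filter (fun p => p.2 j0 = Sgn.dot)) (fun p => p.1 j0 = Sgn.dot)
    (fun p => α p.1 * β p.2)]
  have hdd : ((intPairs 0 w).filter (fun p => p.2 j0 = Sgn.dot)).filter
      (fun p => p.1 j0 = Sgn.dot) = ∅ := by
    rw [Finset.filter_eq_empty_iff]
    intro p hp
    simp only [Finset.mem_filter] at hp
    obtain ⟨hpX, e2⟩ := hp
    intro e1
    have hmem : j0 ∈ bothDot p.1 p.2 := mem_bothDot.2 ⟨e1, e2⟩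
    have hc := (mem_intPairs.1 hpX).2.1
    rw [Finset.card_eq_zero] at hc
    rw [hc] at hmem
    exact absurd hmem (Finset.notMem_empty _)
  rw [hdd, Finset.sum_empty, zero_add, part_ii hw hmin 0 α β, part_iii hw hmin 0 α β]

lemma cup_split_succ (hw : w j0 = Sgn.dot) (hmin : ∀ j ∈ dots w, j0 ≤ j) (m : ℕ)
    (α β : Cochain d) :
    cup (m + 1) α β w
      = cup m (res j0 Sgn.dot β) (res j0 Sgn.dot α) (Function.update w j0 Sgn.pls)
      + cup (m + 1) (res j0 Sgn.pls α) (res j0 Sgn.dot β) (Function.update w j0 Sgn.pls)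
      + cup (m + 1) (res j0 Sgn.dot α) (res j0 Sgn.mns β) (Function.update w j0 Sgn.pls) := by
  classical
  unfold cup
  rw [← Finset.sum_filter_add_sum_filter_not (intPairs (m + 1) w) (fun p => p.2 j0 = Sgn.dot)
    (fun p => α p.1 * β p.2)]
  rw [← Finset.sum_filter_add_sum_filter_not
    ((intPairs (m + 1) w).filter (fun p => p.2 j0 = Sgn.dot)) (fun p => p.1 j0 = Sgn.dot)
    (fun p => α p.1 * β p.2)]
  rw [part_i hw hmin m α β, part_ii hw hmin (m + 1) α β, part_iii hw hmin (m + 1) α β]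

lemma cup_split_all (hw : w j0 = Sgn.dot) (hmin : ∀ j ∈ dots w, j0 ≤ j) (m : ℕ)
    (α β : Cochain d) :
    cup m α β w
      = lowCup m (res j0 Sgn.dot β) (res j0 Sgn.dot α) (Function.update w j0 Sgn.pls)
      + cup m (res j0 Sgn.pls α) (res j0 Sgn.dot β) (Function.update w j0 Sgn.pls)
      + cup m (res j0 Sgn.dot α) (res j0 Sgn.mns β) (Function.update w j0 Sgn.pls) := by
  cases m with
  | zero =>
    rw [lowCup_zero, Pi.zero_apply, zero_add]
    exact cup_split_zero hw hmin α β
  | succ m =>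
    rw [lowCup_succ]
    exact cup_split_succ hw hmin m α β

lemma cup_at_dot_zero (α β : Cochain d) {x : Cell d} (hx : x j0 = Sgn.pls)
    (hxd : ∀ j ∈ dots x, j0 ≤ j) :
    cup 0 α β (Function.update x j0 Sgn.dot)
      = cup 0 (res j0 Sgn.pls α) (res j0 Sgn.dot β) x
      + cup 0 (res j0 Sgn.dot α) (res j0 Sgn.mns β) x := by
  have hw : (Function.update x j0 Sgn.dot) j0 = Sgn.dot := Function.update_self _ _ _
  have hmin : ∀ j ∈ dots (Function.update x j0 Sgn.dot), j0 ≤ j := by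
    intro j hj
    rcases eq_or_ne j j0 with rfl | hne
    · exact le_refl _
    · have := mem_dots.1 hj
      rw [Function.update_of_ne hne] at this
      exact hxd j (mem_dots.2 this)
  have h := cup_split_zero hw hmin α β
  rwa [Function.update_idem, upd_self hx] at h

lemma cup_at_dot_succ (m : ℕ) (α β : Cochain d) {x : Cell d} (hx : x j0 = Sgn.pls)
    (hxd : ∀ j ∈ dots x, j0 ≤ j) :
    cup (m + 1) α β (Function.update x j0 Sgn.dot)
      = cup m (res j0 Sgn.dot β) (res j0 Sgn.dot α) x
      + cup (m + 1) (res j0 Sgn.pls α) (res j0 Sgn.dot β) x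
      + cup (m + 1) (res j0 Sgn.dot α) (res j0 Sgn.mns β) x := by
  have hw : (Function.update x j0 Sgn.dot) j0 = Sgn.dot := Function.update_self _ _ _
  have hmin : ∀ j ∈ dots (Function.update x j0 Sgn.dot), j0 ≤ j := by
    intro j hj
    rcases eq_or_ne j j0 with rfl | hne
    · exact le_refl _
    · have := mem_dots.1 hj
      rw [Function.update_of_ne hne] at this
      exact hxd j (mem_dots.2 this)
  have h := cup_split_succ hw hmin m α β
  rwa [Function.update_idem, upd_self hx] at h

end Split

----------------------------------------------------------------------
-- the Leibniz rule, by induction on the number of dots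
----------------------------------------------------------------------

lemma leibniz (n : ℕ) : ∀ (m : ℕ) (α β : Cochain d) (w : Cell d), (dots w).card = n →
    delta (cup m α β) w
      = cup m (delta α) β w + cup m α (delta β) w + lowCup m α β w + lowCup m β α w := by
  induction n with
  | zero =>
    intro m α β w hcard
    have hemp : dots w = ∅ := Finset.card_eq_zero.1 hcard
    have hall : ∀ j : Fin d, w j ≠ Sgn.dot := fun j hj =>
      Finset.notMem_empty j (hemp ▸ mem_dots.2 hj)
    have hδ : ∀ γ : Cochain d, delta γ w = 0 := fun γ => by
      rw [delta, hemp, Finset.sum_empty]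
    have hfst : ∀ (m' : ℕ) (p : Cell d × Cell d), p ∈ intPairs m' w → p.1 = w ∧ p.2 = w := by
      intro m' p hp
      have h1 := (mem_intPairs.1 hp).1
      exact ⟨funext fun j => (h1 j (hall j)).1, funext fun j => (h1 j (hall j)).2⟩
    have hz1 : cup m (delta α) β w = 0 := by
      unfold cup
      refine Finset.sum_eq_zero fun p hp => ?_
      rw [(hfst m p hp).1, hδ α, zero_mul]
    have hz2 : cup m α (delta β) w = 0 := by
      unfold cup
      refine Finset.sum_eq_zero fun p hp => ?_
      rw [(hfst m p hp).2, hδ β, mul_zero]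
    have hz3 : lowCup m α β w + lowCup m β α w = 0 := by
      cases m with
      | zero => simp [lowCup_zero]
      | succ m' =>
        rw [lowCup_succ, lowCup_succ]
        unfold cup
        rw [← Finset.sum_add_distrib]
        refine Finset.sum_eq_zero fun p hp => ?_
        obtain ⟨e1, e2⟩ := hfst m' p hp
        rw [e1, e2, mul_comm (β w) (α w)]
        exact char2 _
    rw [hδ, hz1, hz2]
    linear_combination - hz3
  | succ n ih =>
    intro m α β w hcard
    have hne : (dots w).Nonempty := Finset.card_pos.1 (by rw [hcard]; exact Nat.succ_pos n)
    set j0 := (dots w).min' hne with hj0_def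
    have hj0 : j0 ∈ dots w := Finset.min'_mem _ hne
    have hw0 : w j0 = Sgn.dot := mem_dots.1 hj0
    have hmin : ∀ j ∈ dots w, j0 ≤ j := fun j hj => Finset.min'_le _ j hj
    have hu0 : (Function.update w j0 Sgn.pls) j0 = Sgn.pls := Function.update_self _ _ _
    have hu0ne : (Function.update w j0 Sgn.pls) j0 ≠ Sgn.dot := by rw [hu0]; simp
    have hdotsu : dots (Function.update w j0 Sgn.pls) = (dots w).erase j0 :=
      dots_update_ne (by simp)
    have hcardu : (dots (Function.update w j0 Sgn.pls)).card = n := by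
      rw [hdotsu, Finset.card_erase_of_mem hj0, hcard]
      simp
    have humin : ∀ j ∈ dots (Function.update w j0 Sgn.pls), j0 ≤ j := by
      intro j hj
      rw [hdotsu] at hj
      exact hmin j (Finset.mem_erase.1 hj).2
    have hxmin : ∀ (j : Fin d) (s : Sgn), j ∈ dots (Function.update w j0 Sgn.pls) →
        ∀ i ∈ dots (Function.update (Function.update w j0 Sgn.pls) j s), j0 ≤ i := by
      intro j s hj i hi
      rcases eq_or_ne i j with rfl | hne'
      · exact humin i hj
      · have := mem_dots.1 hi
        rw [Function.update_of_ne hne'] at this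
        exact humin i (mem_dots.2 this)
    have hxpls : ∀ (j : Fin d), j ∈ dots (Function.update w j0 Sgn.pls) → ∀ s : Sgn,
        (Function.update (Function.update w j0 Sgn.pls) j s) j0 = Sgn.pls := by
      intro j hj s
      have hne' : j0 ≠ j := by
        intro e
        rw [← e] at hj
        exact hu0ne (mem_dots.1 hj)
      rw [Function.update_of_ne hne', hu0]
    have hmnspls : Function.update w j0 Sgn.mns
        = Function.update (Function.update w j0 Sgn.pls) j0 Sgn.mns :=
      (Function.update_idem _ _ _).symm
    have h2 : cup m α β (Function.update w j0 Sgn.pls)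
        = cup m (res j0 Sgn.pls α) (res j0 Sgn.pls β) (Function.update w j0 Sgn.pls) :=
      cup_pls hu0
    have h3 : cup m α β (Function.update w j0 Sgn.mns)
        = cup m (res j0 Sgn.mns α) (res j0 Sgn.mns β) (Function.update w j0 Sgn.pls) := by
      rw [hmnspls]
      exact cup_mns hu0
    cases m with
    | zero =>
      have h1 := delta_split j0 hw0 (cup 0 α β)
      have h4 : delta (res j0 Sgn.dot (cup 0 α β)) (Function.update w j0 Sgn.pls)
          = delta (cup 0 (res j0 Sgn.pls α) (res j0 Sgn.dot β))
              (Function.update w j0 Sgn.pls)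
          + delta (cup 0 (res j0 Sgn.dot α) (res j0 Sgn.mns β))
              (Function.update w j0 Sgn.pls) := by
        have hpt := delta_congr (u := Function.update w j0 Sgn.pls)
          (α := res j0 Sgn.dot (cup 0 α β))
          (β := cup 0 (res j0 Sgn.pls α) (res j0 Sgn.dot β)
            + cup 0 (res j0 Sgn.dot α) (res j0 Sgn.mns β)) ?_
        · rw [hpt, delta_add, Pi.add_apply]
        · intro j hj s hs
          rw [res_apply, Pi.add_apply]
          exact cup_at_dot_zero α β (hxpls j hj s) (hxmin j s hj)
      have hB := ih 0 (res j0 Sgn.pls α) (res j0 Sgn.dot β) (Function.update w j0 Sgn.pls) hcardu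
      have hC := ih 0 (res j0 Sgn.dot α) (res j0 Sgn.mns β) (Function.update w j0 Sgn.pls) hcardu
      simp only [lowCup_zero, Pi.zero_apply, add_zero] at hB hC
      have hsb := cup_split_zero hw0 hmin (delta α) β
      have hb2 : cup 0 (res j0 Sgn.pls (delta α)) (res j0 Sgn.dot β)
            (Function.update w j0 Sgn.pls)
          = cup 0 (delta (res j0 Sgn.pls α)) (res j0 Sgn.dot β)
            (Function.update w j0 Sgn.pls) :=
        cup_congr hu0ne (fun z hz => res_delta_pls (hz.trans hu0)) (fun z hz => rfl)
      have hb3 : cup 0 (res j0 Sgn.dot (delta α)) (res j0 Sgn.mns β)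
            (Function.update w j0 Sgn.pls)
          = cup 0 (res j0 Sgn.pls α) (res j0 Sgn.mns β) (Function.update w j0 Sgn.pls)
          + cup 0 (res j0 Sgn.mns α) (res j0 Sgn.mns β) (Function.update w j0 Sgn.pls)
          + cup 0 (delta (res j0 Sgn.dot α)) (res j0 Sgn.mns β)
            (Function.update w j0 Sgn.pls) := by
        have := cup_congr (m := 0) hu0ne
          (α := res j0 Sgn.dot (delta α))
          (α' := res j0 Sgn.pls α + res j0 Sgn.mns α + delta (res j0 Sgn.dot α))
          (β := res j0 Sgn.mns β) (β' := res j0 Sgn.mns β)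
          (fun z hz => res_delta_dot (hz.trans hu0)) (fun z hz => rfl)
        rw [this, cup_add_left, cup_add_left, Pi.add_apply, Pi.add_apply]
      have hsc := cup_split_zero hw0 hmin α (delta β)
      have hc2 : cup 0 (res j0 Sgn.pls α) (res j0 Sgn.dot (delta β))
            (Function.update w j0 Sgn.pls)
          = cup 0 (res j0 Sgn.pls α) (res j0 Sgn.pls β) (Function.update w j0 Sgn.pls)
          + cup 0 (res j0 Sgn.pls α) (res j0 Sgn.mns β) (Function.update w j0 Sgn.pls)
          + cup 0 (res j0 Sgn.pls α) (delta (res j0 Sgn.dot β))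
            (Function.update w j0 Sgn.pls) := by
        have := cup_congr (m := 0) hu0ne
          (α := res j0 Sgn.pls α) (α' := res j0 Sgn.pls α)
          (β := res j0 Sgn.dot (delta β))
          (β' := res j0 Sgn.pls β + res j0 Sgn.mns β + delta (res j0 Sgn.dot β))
          (fun z hz => rfl) (fun z hz => res_delta_dot (hz.trans hu0))
        rw [this, cup_add_right, cup_add_right, Pi.add_apply, Pi.add_apply]
      have hc3 : cup 0 (res j0 Sgn.dot α) (res j0 Sgn.mns (delta β))
            (Function.update w j0 Sgn.pls)
          = cup 0 (res j0 Sgn.dot α) (delta (res j0 Sgn.mns β))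
            (Function.update w j0 Sgn.pls) :=
        cup_congr hu0ne (fun z hz => rfl) (fun z hz => res_delta_mns (hz.trans hu0))
      simp only [lowCup_zero, Pi.zero_apply, add_zero]
      linear_combination h1 + h2 + h3 + h4 + hB + hC - hsb - hb2 - hb3 - hsc - hc2 - hc3
        - char2 (cup 0 (res j0 Sgn.pls α) (res j0 Sgn.mns β) (Function.update w j0 Sgn.pls))
    | succ m' =>
      have h1 := delta_split j0 hw0 (cup (m' + 1) α β)
      have h4 : delta (res j0 Sgn.dot (cup (m' + 1) α β)) (Function.update w j0 Sgn.pls)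
          = delta (cup m' (res j0 Sgn.dot β) (res j0 Sgn.dot α))
              (Function.update w j0 Sgn.pls)
          + delta (cup (m' + 1) (res j0 Sgn.pls α) (res j0 Sgn.dot β))
              (Function.update w j0 Sgn.pls)
          + delta (cup (m' + 1) (res j0 Sgn.dot α) (res j0 Sgn.mns β))
              (Function.update w j0 Sgn.pls) := by
        have hpt := delta_congr (u := Function.update w j0 Sgn.pls)
          (α := res j0 Sgn.dot (cup (m' + 1) α β))
          (β := cup m' (res j0 Sgn.dot β) (res j0 Sgn.dot α)
            + cup (m' + 1) (res j0 Sgn.pls α) (res j0 Sgn.dot β)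
            + cup (m' + 1) (res j0 Sgn.dot α) (res j0 Sgn.mns β)) ?_
        · rw [hpt, delta_add, delta_add, Pi.add_apply, Pi.add_apply]
        · intro j hj s hs
          rw [res_apply, Pi.add_apply, Pi.add_apply]
          exact cup_at_dot_succ m' α β (hxpls j hj s) (hxmin j s hj)
      have hA := ih m' (res j0 Sgn.dot β) (res j0 Sgn.dot α) (Function.update w j0 Sgn.pls) hcardu
      have hB := ih (m' + 1) (res j0 Sgn.pls α) (res j0 Sgn.dot β) (Function.update w j0 Sgn.pls) hcardu
      have hC := ih (m' + 1) (res j0 Sgn.dot α) (res j0 Sgn.mns β) (Function.update w j0 Sgn.pls) hcardu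
      simp only [lowCup_succ] at hB hC
      have hsb := cup_split_succ hw0 hmin m' (delta α) β
      have hb1 : cup m' (res j0 Sgn.dot β) (res j0 Sgn.dot (delta α))
            (Function.update w j0 Sgn.pls)
          = cup m' (res j0 Sgn.dot β) (res j0 Sgn.pls α) (Function.update w j0 Sgn.pls)
          + cup m' (res j0 Sgn.dot β) (res j0 Sgn.mns α) (Function.update w j0 Sgn.pls)
          + cup m' (res j0 Sgn.dot β) (delta (res j0 Sgn.dot α))
            (Function.update w j0 Sgn.pls) := by
        have := cup_congr (m := m') hu0ne
          (α := res j0 Sgn.dot β) (α' := res j0 Sgn.dot β)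
          (β := res j0 Sgn.dot (delta α))
          (β' := res j0 Sgn.pls α + res j0 Sgn.mns α + delta (res j0 Sgn.dot α))
          (fun z hz => rfl) (fun z hz => res_delta_dot (hz.trans hu0))
        rw [this, cup_add_right, cup_add_right, Pi.add_apply, Pi.add_apply]
      have hb2 : cup (m' + 1) (res j0 Sgn.pls (delta α)) (res j0 Sgn.dot β)
            (Function.update w j0 Sgn.pls)
          = cup (m' + 1) (delta (res j0 Sgn.pls α)) (res j0 Sgn.dot β)
            (Function.update w j0 Sgn.pls) :=
        cup_congr hu0ne (fun z hz => res_delta_pls (hz.trans hu0)) (fun z hz => rfl)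
      have hb3 : cup (m' + 1) (res j0 Sgn.dot (delta α)) (res j0 Sgn.mns β)
            (Function.update w j0 Sgn.pls)
          = cup (m' + 1) (res j0 Sgn.pls α) (res j0 Sgn.mns β) (Function.update w j0 Sgn.pls)
          + cup (m' + 1) (res j0 Sgn.mns α) (res j0 Sgn.mns β) (Function.update w j0 Sgn.pls)
          + cup (m' + 1) (delta (res j0 Sgn.dot α)) (res j0 Sgn.mns β)
            (Function.update w j0 Sgn.pls) := by
        have := cup_congr (m := m' + 1) hu0ne
          (α := res j0 Sgn.dot (delta α))
          (α' := res j0 Sgn.pls α + res j0 Sgn.mns α + delta (res j0 Sgn.dot α))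
          (β := res j0 Sgn.mns β) (β' := res j0 Sgn.mns β)
          (fun z hz => res_delta_dot (hz.trans hu0)) (fun z hz => rfl)
        rw [this, cup_add_left, cup_add_left, Pi.add_apply, Pi.add_apply]
      have hsc := cup_split_succ hw0 hmin m' α (delta β)
      have hc1 : cup m' (res j0 Sgn.dot (delta β)) (res j0 Sgn.dot α)
            (Function.update w j0 Sgn.pls)
          = cup m' (res j0 Sgn.pls β) (res j0 Sgn.dot α) (Function.update w j0 Sgn.pls)
          + cup m' (res j0 Sgn.mns β) (res j0 Sgn.dot α) (Function.update w j0 Sgn.pls)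
          + cup m' (delta (res j0 Sgn.dot β)) (res j0 Sgn.dot α)
            (Function.update w j0 Sgn.pls) := by
        have := cup_congr (m := m') hu0ne
          (α := res j0 Sgn.dot (delta β))
          (α' := res j0 Sgn.pls β + res j0 Sgn.mns β + delta (res j0 Sgn.dot β))
          (β := res j0 Sgn.dot α) (β' := res j0 Sgn.dot α)
          (fun z hz => res_delta_dot (hz.trans hu0)) (fun z hz => rfl)
        rw [this, cup_add_left, cup_add_left, Pi.add_apply, Pi.add_apply]
      have hc2 : cup (m' + 1) (res j0 Sgn.pls α) (res j0 Sgn.dot (delta β))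
            (Function.update w j0 Sgn.pls)
          = cup (m' + 1) (res j0 Sgn.pls α) (res j0 Sgn.pls β) (Function.update w j0 Sgn.pls)
          + cup (m' + 1) (res j0 Sgn.pls α) (res j0 Sgn.mns β) (Function.update w j0 Sgn.pls)
          + cup (m' + 1) (res j0 Sgn.pls α) (delta (res j0 Sgn.dot β))
            (Function.update w j0 Sgn.pls) := by
        have := cup_congr (m := m' + 1) hu0ne
          (α := res j0 Sgn.pls α) (α' := res j0 Sgn.pls α)
          (β := res j0 Sgn.dot (delta β))
          (β' := res j0 Sgn.pls β + res j0 Sgn.mns β + delta (res j0 Sgn.dot β))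
          (fun z hz => rfl) (fun z hz => res_delta_dot (hz.trans hu0))
        rw [this, cup_add_right, cup_add_right, Pi.add_apply, Pi.add_apply]
      have hc3 : cup (m' + 1) (res j0 Sgn.dot α) (res j0 Sgn.mns (delta β))
            (Function.update w j0 Sgn.pls)
          = cup (m' + 1) (res j0 Sgn.dot α) (delta (res j0 Sgn.mns β))
            (Function.update w j0 Sgn.pls) :=
        cup_congr hu0ne (fun z hz => rfl) (fun z hz => res_delta_mns (hz.trans hu0))
      have hsd := cup_split_all hw0 hmin m' α β
      have hse := cup_split_all hw0 hmin m' β α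
      simp only [lowCup_succ]
      linear_combination h1 + h2 + h3 + h4 + hA + hB + hC
        - hsb - hb1 - hb2 - hb3 - hsc - hc1 - hc2 - hc3 - hsd - hse
        - char2 (cup m' (res j0 Sgn.dot β) (res j0 Sgn.mns α) (Function.update w j0 Sgn.pls))
        - char2 (cup (m' + 1) (res j0 Sgn.pls α) (res j0 Sgn.mns β) (Function.update w j0 Sgn.pls))
        - char2 (cup m' (res j0 Sgn.pls β) (res j0 Sgn.dot α) (Function.update w j0 Sgn.pls))


----------------------------------------------------------------------
-- the coboundary squares to zero
----------------------------------------------------------------------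

lemma delta_delta_aux (n : ℕ) : ∀ (α : Cochain d) (w : Cell d), (dots w).card = n →
    delta (delta α) w = 0 := by
  induction n with
  | zero =>
    intro α w hcard
    have hemp : dots w = ∅ := Finset.card_eq_zero.1 hcard
    rw [delta, hemp, Finset.sum_empty]
  | succ n ih =>
    intro α w hcard
    have hne : (dots w).Nonempty := Finset.card_pos.1 (by rw [hcard]; exact Nat.succ_pos n)
    set j0 := (dots w).min' hne with hj0_def
    have hj0 : j0 ∈ dots w := Finset.min'_mem _ hne
    have hw0 : w j0 = Sgn.dot := mem_dots.1 hj0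
    have hu0 : (Function.update w j0 Sgn.pls) j0 = Sgn.pls := Function.update_self _ _ _
    have hu0ne : (Function.update w j0 Sgn.pls) j0 ≠ Sgn.dot := by rw [hu0]; simp
    have hdotsu : dots (Function.update w j0 Sgn.pls) = (dots w).erase j0 :=
      dots_update_ne (by simp)
    have hcardu : (dots (Function.update w j0 Sgn.pls)).card = n := by
      rw [hdotsu, Finset.card_erase_of_mem hj0, hcard]
      simp
    have hxpls : ∀ (j : Fin d), j ∈ dots (Function.update w j0 Sgn.pls) → ∀ s : Sgn,
        (Function.update (Function.update w j0 Sgn.pls) j s) j0 = Sgn.pls := by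
      intro j hj s
      have hne' : j0 ≠ j := by
        intro e
        rw [← e] at hj
        exact hu0ne (mem_dots.1 hj)
      rw [Function.update_of_ne hne', hu0]
    have h1 := delta_split j0 hw0 (delta α)
    have ha : delta α (Function.update w j0 Sgn.pls)
        = delta (res j0 Sgn.pls α) (Function.update w j0 Sgn.pls) := delta_res_pls hu0
    have hb : delta α (Function.update w j0 Sgn.mns)
        = delta (res j0 Sgn.mns α) (Function.update w j0 Sgn.pls) := by
      rw [show Function.update w j0 Sgn.mns
        = Function.update (Function.update w j0 Sgn.pls) j0 Sgn.mns from
        (Function.update_idem _ _ _).symm]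
      exact delta_at_mns hu0
    have hc : delta (res j0 Sgn.dot (delta α)) (Function.update w j0 Sgn.pls)
        = delta (res j0 Sgn.pls α) (Function.update w j0 Sgn.pls)
        + delta (res j0 Sgn.mns α) (Function.update w j0 Sgn.pls)
        + delta (delta (res j0 Sgn.dot α)) (Function.update w j0 Sgn.pls) := by
      have hpt := delta_congr (u := Function.update w j0 Sgn.pls)
        (α := res j0 Sgn.dot (delta α))
        (β := res j0 Sgn.pls α + res j0 Sgn.mns α + delta (res j0 Sgn.dot α)) ?_
      · rw [hpt, delta_add, delta_add, Pi.add_apply, Pi.add_apply]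
      · intro j hj s hs
        exact res_delta_dot (hxpls j hj s)
    have hz := ih (res j0 Sgn.dot α) (Function.update w j0 Sgn.pls) hcardu
    linear_combination h1 + ha + hb + hc + hz
      + char2 (delta (res j0 Sgn.pls α) (Function.update w j0 Sgn.pls))
      + char2 (delta (res j0 Sgn.mns α) (Function.update w j0 Sgn.pls))

lemma delta_delta (α : Cochain d) : delta (delta α) = 0 :=
  funext fun w => delta_delta_aux (dots w).card α w rfl

end CupAux

/-- For `d ≥ 1`, `k ≥ 1`, and any `ℤ₂`-cochain `λ` on the
`d`-dimensional hypercube,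
`(δλ) ∪_k (δλ) = δ( λ ∪_k (δλ) + λ ∪_{k−1} λ )`, as an equality of `ℤ₂`-cochains.
In particular, the `∪_k`-square of a coboundary is itself a coboundary. -/
theorem cup_square_of_coboundary (d k : ℕ) (hd : 1 ≤ d) (hk : 1 ≤ k) (l : Cochain d) :
    cup k (delta l) (delta l) = delta (cup k l (delta l) + cup (k - 1) l l) := by
  open CupAux in
  cases k with
  | zero => omega
  | succ k' =>
    funext w
    simp only [Nat.add_sub_cancel]
    rw [delta_add, Pi.add_apply]
    have hLb := leibniz (dots w).card (k' + 1) l (delta l) w rfl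
    simp only [lowCup_succ, delta_delta, cup_zero_right, Pi.zero_apply, add_zero] at hLb
    have hLc := leibniz (dots w).card k' l l w rfl
    linear_combination - hLb - hLc - char2 (cup k' l (delta l) w)
      - char2 (cup k' (delta l) l w) - char2 (lowCup k' l l w)
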